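/- (Computing in the Limit Normal Form) There exist a primitive recursive function U and a primitive recursive predicate T'(p, x, y) such that a property P_p over constant sequences is computable in the limit with value P_p(x) if and only if P_p(x) = U(λy. T'(p, x, y)), where λy denotes the largest y for which T'(p,x,y) holds (this largest y existing because T'(p,x,·) holds at only finitely many points). -/

import Mathlib

open Nat.Partrec (Code)

/-- `φ i` is the partial recursive function with index `i`. -/
def φ (i : ℕ) : ℕ →. ℕ := (Denumerable.ofNat Code i).eval

/-- `LConv ψ x v`: the guessing function `ψ` on input `x` l-converges in the limit to `v`:
there is a `u` with `ψ x u = v` and for all `t > u`, `ψ x t = v` whenever it converges. -/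
def LConv (ψ : ℕ → ℕ →. ℕ) (x v : ℕ) : Prop :=
  ∃ u, v ∈ ψ x u ∧ ∀ t, u < t → ∀ w ∈ ψ x t, w = v

/-! ### Alternation count of a list -/

/-- number of adjacent alternations in a list -/
def alt : List ℕ → ℕ
  | [] => 0
  | [_] => 0
  | a :: b :: l => (if a = b then 0 else 1) + alt (b :: l)

lemma alt_le_cons (a : ℕ) (l : List ℕ) : alt l ≤ alt (a :: l) := by
  cases l with
  | nil => simp [alt]
  | cons b t => rw [alt]; exact Nat.le_add_left _ _

lemma alt_cons_le (a : ℕ) (l : List ℕ) : alt (a :: l) ≤ 1 + alt l := by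
  cases l with
  | nil => simp [alt]
  | cons b t =>
    rw [alt]
    exact Nat.add_le_add_right (by split <;> omega) _

lemma alt_sublist : ∀ {l l' : List ℕ}, List.Sublist l l' →
    alt l ≤ alt l' ∧ ∀ a b, l.head? = some a → l'.head? = some b → a ≠ b → alt l < alt l' := by
  intro l l' h
  induction h with
  | slnil => exact ⟨le_refl _, by simp⟩
  | @cons l₁ l₂ b h ih =>
    constructor
    · exact ih.1.trans (alt_le_cons _ _)
    · intro x y hx hy hxy
      cases l₁ with
      | nil => simp at hx
      | cons x' t =>
        rw [List.head?_cons, Option.some.injEq] at hx hy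
        subst hx; subst hy
        cases l₂ with
        | nil => exact absurd (List.sublist_nil.1 h) (by simp)
        | cons z t' =>
          by_cases hxz : x' = z
          · have h1 : alt (x' :: t) ≤ alt (z :: t') := ih.1
            have h2 : alt (b :: z :: t') = 1 + alt (z :: t') := by
              rw [alt, if_neg (fun hh => hxy (by rw [hxz, ← hh]))]
            omega
          · have h1 : alt (x' :: t) < alt (z :: t') := ih.2 x' z rfl rfl hxz
            have h2 : alt (z :: t') ≤ alt (b :: z :: t') := alt_le_cons _ _
            omega
  | @cons_cons l₁ l₂ a h ih =>
    constructor
    · cases l₁ with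
      | nil => cases l₂ with
        | nil => simp
        | cons z t' => simpa [alt] using Nat.zero_le _
      | cons x t =>
        cases l₂ with
        | nil => exact absurd (List.sublist_nil.1 h) (by simp)
        | cons z t' =>
          by_cases hxz : x = z
          · subst hxz
            rw [alt, alt]
            exact Nat.add_le_add_left ih.1 _
          · have h1 : alt (x :: t) < alt (z :: t') := ih.2 x z rfl rfl hxz
            have h2 : alt (a :: x :: t) ≤ 1 + alt (x :: t) := alt_cons_le _ _
            have h3 : alt (z :: t') ≤ alt (a :: z :: t') := alt_le_cons _ _
            omega
    · intro x y hx hy hxy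
      rw [List.head?_cons, Option.some.injEq] at hx hy
      exact absurd (hx.symm.trans hy) hxy

lemma alt_le_of_sublist {l l' : List ℕ} (h : List.Sublist l l') : alt l ≤ alt l' :=
  (alt_sublist h).1

lemma alt_lt_of_head_ne {l l' : List ℕ} (h : List.Sublist l l') {a b : ℕ}
    (ha : l.head? = some a) (hb : l'.head? = some b) (hab : a ≠ b) : alt l < alt l' :=
  (alt_sublist h).2 a b ha hb hab

lemma alt_append_le (l₁ l₂ : List ℕ) : alt (l₁ ++ l₂) ≤ alt l₁ + (alt l₂ + 1) := by
  induction l₁ with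
  | nil =>
    simp only [List.nil_append]
    have : alt ([] : List ℕ) = 0 := rfl
    omega
  | cons a t ih =>
    cases t with
    | nil =>
      simp only [List.singleton_append]
      have h1 := alt_cons_le a l₂
      have h2 : alt [a] = 0 := rfl
      omega
    | cons b t' =>
      have h1 : alt ((a :: b :: t') ++ l₂) = (if a = b then 0 else 1) + alt ((b :: t') ++ l₂) := rfl
      have h2 : alt (a :: b :: t') = (if a = b then 0 else 1) + alt (b :: t') := rfl
      omega

lemma alt_const {v : ℕ} : ∀ l : List ℕ, (∀ w ∈ l, w = v) → alt l = 0 := by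
  intro l
  induction l with
  | nil => intro; rfl
  | cons a t ih =>
    intro h
    cases t with
    | nil => rfl
    | cons b t' =>
      rw [alt, if_pos ((h a (by simp)).trans (h b (by simp)).symm),
        ih (fun w hw => h w (by simp [hw]))]

lemma alt_le_length : ∀ l : List ℕ, alt l ≤ l.length := by
  intro l
  induction l with
  | nil => simp [alt]
  | cons a t ih =>
    calc alt (a :: t) ≤ 1 + alt t := alt_cons_le a t
    _ ≤ 1 + t.length := by omega
    _ = (a :: t).length := by simp [Nat.add_comm]

lemma alt_cons_headD (b : ℕ) (t : List ℕ) :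
    alt (b :: t) = (if b = t.head?.getD b then 0 else 1) + alt t := by
  cases t with
  | nil => simp [alt]
  | cons c t' => rfl

/-! ### Lists obtained by `filterMap` over a reversed range -/

section FM
variable (f g : ℕ → Option ℕ)

lemma filterMap_sublist_mono (h : ∀ u w, f u = some w → g u = some w) :
    ∀ l : List ℕ, List.Sublist (l.filterMap f) (l.filterMap g) := by
  intro l
  induction l with
  | nil => simp
  | cons a t ih =>
    rw [List.filterMap_cons, List.filterMap_cons]
    cases hfa : f a with
    | none =>
      cases hga : g a with
      | none => exact ih
      | some w => exact ih.cons w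
    | some w => rw [h a w hfa]; exact ih.cons₂ w

lemma rev_range_succ (k : ℕ) : (List.range (k + 1)).reverse = k :: (List.range k).reverse := by
  simp [List.range_succ]

lemma rev_range_decomp {m k : ℕ} (h : m < k) :
    ∃ hi : List ℕ, (List.range k).reverse.filterMap f
        = hi ++ (List.range (m + 1)).reverse.filterMap f
      ∧ ∀ w, w ∈ hi ↔ ∃ u, m < u ∧ u < k ∧ f u = some w := by
  induction k with
  | zero => omega
  | succ k ih =>
    rcases Nat.lt_or_ge m k with h' | h'
    · obtain ⟨hi, he, hmem⟩ := ih h'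
      cases hfk : f k with
      | none =>
        refine ⟨hi, ?_, ?_⟩
        · rw [rev_range_succ, List.filterMap_cons, hfk, he]
        · intro w
          rw [hmem w]
          constructor
          · rintro ⟨u, h1, h2, h3⟩; exact ⟨u, h1, by omega, h3⟩
          · rintro ⟨u, h1, h2, h3⟩
            refine ⟨u, h1, ?_, h3⟩
            rcases Nat.lt_or_ge u k with hu | hu
            · exact hu
            · exfalso
              have : u = k := by omega
              rw [this, hfk] at h3; exact nomatch h3
      | some w' =>
        refine ⟨w' :: hi, ?_, ?_⟩
        · rw [rev_range_succ, List.filterMap_cons, hfk, he]; rfl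
        · intro w
          simp only [List.mem_cons, hmem w]
          constructor
          · rintro (rfl | ⟨u, h1, h2, h3⟩)
            · exact ⟨k, h', by omega, hfk⟩
            · exact ⟨u, h1, by omega, h3⟩
          · rintro ⟨u, h1, h2, h3⟩
            rcases Nat.lt_or_ge u k with hu | hu
            · exact Or.inr ⟨u, h1, hu, h3⟩
            · have : u = k := by omega
              rw [this, hfk] at h3
              exact Or.inl (Option.some.injEq _ _ ▸ h3.symm ▸ rfl)
    · have hmk : m = k := by omega
      subst hmk
      exact ⟨[], by simp, by intro w; simp; intro u h1 h2; omega⟩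

lemma rev_range_head_of {k m w : ℕ} (hmk : m < k) (hm : f m = some w)
    (hnone : ∀ u, m < u → u < k → f u = none) :
    ((List.range k).reverse.filterMap f).head? = some w := by
  obtain ⟨hi, he, hmem⟩ := rev_range_decomp f hmk
  have hnil : hi = [] := by
    rw [List.eq_nil_iff_forall_not_mem]
    intro w' hw'
    obtain ⟨u, h1, h2, h3⟩ := (hmem w').1 hw'
    rw [hnone u h1 h2] at h3
    exact nomatch h3
  rw [he, hnil, List.nil_append, rev_range_succ, List.filterMap_cons, hm]
  rfl

lemma rev_range_head_inv {k w : ℕ}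
    (h : ((List.range k).reverse.filterMap f).head? = some w) :
    ∃ m, m < k ∧ f m = some w ∧ ∀ u, m < u → u < k → f u = none := by
  induction k with
  | zero => simp at h
  | succ k ih =>
    rw [rev_range_succ, List.filterMap_cons] at h
    cases hfk : f k with
    | some w' =>
      rw [hfk] at h
      rw [List.head?_cons, Option.some.injEq] at h
      exact ⟨k, by omega, by rw [hfk, h], fun u h1 h2 => by omega⟩
    | none =>
      rw [hfk] at h
      obtain ⟨m, h1, h2, h3⟩ := ih h
      refine ⟨m, by omega, h2, fun u hu1 hu2 => ?_⟩
      rcases Nat.lt_or_ge u k with hu | hu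
      · exact h3 u hu1 hu
      · have : u = k := by omega
        rw [this, hfk]

end FM

lemma head?_append_of_ne_nil {l₁ l₂ : List ℕ} (h : l₁ ≠ []) :
    (l₁ ++ l₂).head? = l₁.head? := by
  cases l₁ with
  | nil => exact absurd rfl h
  | cons a t => simp

/-! ### The normal form predicate -/

/-- the `u`-th guess computed with time bound `s+1`. -/
def Fv (p x s u : ℕ) : Option ℕ :=
  Nat.Partrec.Code.evaln (s + 1) (Denumerable.ofNat Code p) (Nat.pair x u)

/-- the list of visible guess values at stage `s`, in decreasing order of `u`. -/
def cur (p x s : ℕ) : List ℕ := (List.range (s + 1)).reverse.filterMap (Fv p x s)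

/-- the currently visible guess value at stage `s` (`0` if none). -/
def hv (p x s : ℕ) : ℕ := ((cur p x s).head?).getD 0

/-- `s` is an event stage. -/
def isEv (p x s : ℕ) : Bool :=
  decide (cur p x s ≠ [] ∧
    (s = 0 ∨ cur p x (s - 1) = [] ∨ alt (cur p x (s - 1)) < alt (cur p x s)))

/-- strictly increasing baseline making event codes increase with the stage. -/
def Bf (p x : ℕ) : ℕ → ℕ
  | 0 => 0
  | s + 1 => Nat.pair (Bf p x s) (hv p x s) + 1

/-- the code of the (potential) event at stage `s`. -/
def codeOf (p x s : ℕ) : ℕ := Nat.pair (Bf p x s) (hv p x s)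

/-- the limit-normal-form predicate. -/
def T' (p x y : ℕ) : Bool :=
  (List.range (y + 1)).any fun s => isEv p x s && (y == codeOf p x s)

section Lemmas
variable {p x : ℕ}

lemma Fv_mono {s t u w : ℕ} (h : s ≤ t) (hf : Fv p x s u = some w) : Fv p x t u = some w :=
  Nat.Partrec.Code.evaln_mono (Nat.succ_le_succ h) hf

lemma Fv_u_le {s u w : ℕ} (hf : Fv p x s u = some w) : u ≤ s := by
  have := Nat.Partrec.Code.evaln_bound hf
  have := Nat.right_le_pair x u
  omega

lemma cur_sublist {s t : ℕ} (h : s ≤ t) : List.Sublist (cur p x s) (cur p x t) := by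
  induction t, h using Nat.le_induction with
  | base => exact List.Sublist.refl _
  | succ t ht ih =>
    refine ih.trans ?_
    have h1 : List.Sublist (cur p x t) ((List.range (t + 1)).reverse.filterMap (Fv p x (t + 1))) :=
      filterMap_sublist_mono _ _ (fun u w => Fv_mono (Nat.le_succ t)) _
    have h2 : List.Sublist ((List.range (t + 1)).reverse.filterMap (Fv p x (t + 1)))
        (cur p x (t + 1)) :=
      ((List.range_sublist.2 (Nat.le_succ _)).reverse).filterMap _
    exact h1.trans h2

lemma cur_ne_nil_mono {s t : ℕ} (h : s ≤ t) (hne : cur p x s ≠ []) : cur p x t ≠ [] :=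
  fun hn => hne (List.sublist_nil.1 (hn ▸ cur_sublist h))

lemma mem_cur {s w : ℕ} : w ∈ cur p x s ↔ ∃ u, Fv p x s u = some w := by
  rw [cur, List.mem_filterMap]
  constructor
  · rintro ⟨u, _, h2⟩; exact ⟨u, h2⟩
  · rintro ⟨u, h⟩
    refine ⟨u, ?_, h⟩
    have := Fv_u_le h
    simp only [List.mem_reverse, List.mem_range]
    omega

lemma alt_cur_mono {s t : ℕ} (h : s ≤ t) : alt (cur p x s) ≤ alt (cur p x t) :=
  alt_le_of_sublist (cur_sublist h)

lemma isEv_iff {s : ℕ} : isEv p x s = true ↔ (cur p x s ≠ [] ∧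
    (s = 0 ∨ cur p x (s - 1) = [] ∨ alt (cur p x (s - 1)) < alt (cur p x s))) := by
  simp [isEv]

lemma Bf_lt_succ (s : ℕ) : Bf p x s < Bf p x (s + 1) :=
  Nat.lt_succ_of_le (Nat.left_le_pair _ _)

lemma Bf_mono {s t : ℕ} (h : s ≤ t) : Bf p x s ≤ Bf p x t := by
  induction t, h using Nat.le_induction with
  | base => exact le_refl _
  | succ t ht ih => exact ih.trans (Bf_lt_succ t).le

lemma le_Bf (s : ℕ) : s ≤ Bf p x s := by
  induction s with
  | zero => exact Nat.zero_le _
  | succ s ih => exact Nat.lt_of_le_of_lt ih (Bf_lt_succ s)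

lemma Bf_le_codeOf (s : ℕ) : Bf p x s ≤ codeOf p x s := Nat.left_le_pair _ _

lemma le_codeOf (s : ℕ) : s ≤ codeOf p x s := (le_Bf s).trans (Bf_le_codeOf s)

lemma codeOf_lt_Bf_succ (s : ℕ) : codeOf p x s < Bf p x (s + 1) := Nat.lt_succ_self _

lemma codeOf_strictMono {s t : ℕ} (h : s < t) : codeOf p x s < codeOf p x t :=
  Nat.lt_of_lt_of_le (codeOf_lt_Bf_succ s) ((Bf_mono h).trans (Bf_le_codeOf t))

lemma T'_iff {y : ℕ} : T' p x y = true ↔ ∃ s, isEv p x s = true ∧ y = codeOf p x s := by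
  rw [T', List.any_eq_true]
  constructor
  · rintro ⟨s, _, hs⟩
    rw [Bool.and_eq_true, beq_iff_eq] at hs
    exact ⟨s, hs.1, hs.2⟩
  · rintro ⟨s, h1, h2⟩
    refine ⟨s, List.mem_range.2 ?_, by rw [Bool.and_eq_true, beq_iff_eq]; exact ⟨h1, h2⟩⟩
    have := le_codeOf (p := p) (x := x) s
    omega

/-- after a stage with no further events, the alternation count is frozen. -/
lemma alt_const_of_no_event {s T : ℕ} (hne : cur p x s ≠ [])
    (hnoev : ∀ t, s < t → t ≤ T → isEv p x t = false) (h : s ≤ T) :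
    alt (cur p x T) = alt (cur p x s) := by
  induction T, h using Nat.le_induction with
  | base => rfl
  | succ T hT ih =>
    have ih' := ih (fun t h1 h2 => hnoev t h1 (by omega))
    have hev := hnoev (T + 1) (by omega) (le_refl _)
    have hne1 : cur p x (T + 1) ≠ [] := cur_ne_nil_mono (by omega) hne
    have hne0 : cur p x T ≠ [] := cur_ne_nil_mono hT hne
    have : ¬ (isEv p x (T + 1) = true) := by rw [hev]; simp
    rw [isEv_iff] at this
    have h4 : ¬ alt (cur p x T) < alt (cur p x (T + 1)) := fun hlt =>
      this ⟨hne1, Or.inr (Or.inr (by simpa using hlt))⟩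
    have h5 : alt (cur p x T) ≤ alt (cur p x (T + 1)) := alt_cur_mono (Nat.le_succ T)
    omega

/-- frozen alternation count freezes the head of the guess list. -/
lemma head_const_of_alt_const {s t : ℕ} (hne : cur p x s ≠ []) (h : s ≤ t)
    (halt : alt (cur p x t) = alt (cur p x s)) :
    (cur p x t).head? = (cur p x s).head? := by
  have hnet : cur p x t ≠ [] := cur_ne_nil_mono h hne
  rw [List.head?_eq_head hne, List.head?_eq_head hnet]
  by_contra hc
  have hab : (cur p x s).head hne ≠ (cur p x t).head hnet := fun hh => hc (by rw [hh])
  have := alt_lt_of_head_ne (cur_sublist h) (List.head?_eq_head hne)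
    (List.head?_eq_head hnet) hab
  omega

end Lemmas

/-! ### Primrec proofs -/

namespace PrimrecProofs
open Primrec

lemma primrec_list_any {α β : Type} [Primcodable α] [Primcodable β]
    {f : α → List β} {g : α → β → Bool} (hf : Primrec f) (hg : Primrec₂ g) :
    Primrec fun a => (f a).any (g a) :=
  (Primrec.list_foldr hf (Primrec.const false)
      ((Primrec.cond (hg.comp Primrec.fst (Primrec.fst.comp Primrec.snd))
        (Primrec.const true) (Primrec.snd.comp Primrec.snd)).to₂)).of_eq fun a => by
    induction f a with
    | nil => rfl
    | cons b t ih =>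
      rw [List.foldr_cons, ih, List.any_cons]
      cases g a b <;> simp

lemma primrec_cur : Primrec fun a : ℕ × ℕ × ℕ => cur a.1 a.2.1 a.2.2 := by
  have hF : Primrec₂ fun (a : ℕ × ℕ × ℕ) (u : ℕ) => Fv a.1 a.2.1 a.2.2 u := by
    have := Nat.Partrec.Code.primrec_evaln.comp
      (Primrec.pair
        (Primrec.pair (succ.comp (snd.comp (snd.comp fst)))
          ((Primrec.ofNat Code).comp (fst.comp fst)))
        (Primrec₂.natPair.comp ((fst.comp snd).comp fst) snd))
    exact this
  exact Primrec.listFilterMap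
    (list_reverse.comp (list_range.comp (succ.comp (snd.comp snd)))) hF

lemma primrec_alt : Primrec alt := by
  have h : Primrec fun l : List ℕ =>
      List.recOn (motive := fun _ => ℕ) l 0
        (fun b t ih => (if b = t.head?.getD b then 0 else 1) + ih) := by
    refine Primrec.list_rec (f := fun l : List ℕ => l) (g := fun _ => (0 : ℕ))
      (h := fun _ q => (if q.1 = q.2.1.head?.getD q.1 then 0 else 1) + q.2.2)
      Primrec.id (const 0) ?_
    have hb : Primrec fun a : List ℕ × ℕ × List ℕ × ℕ => a.2.1 := fst.comp snd
    have ht : Primrec fun a : List ℕ × ℕ × List ℕ × ℕ => a.2.2.1 := fst.comp (snd.comp snd)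
    have hih : Primrec fun a : List ℕ × ℕ × List ℕ × ℕ => a.2.2.2 := snd.comp (snd.comp snd)
    have hgd : Primrec fun a : List ℕ × ℕ × List ℕ × ℕ => a.2.2.1.head?.getD a.2.1 :=
      option_getD.comp (list_head?.comp ht) hb
    exact (nat_add.comp (Primrec.ite (Primrec.eq.comp hb hgd) (const 0) (const 1)) hih).to₂
  refine h.of_eq fun l => ?_
  induction l with
  | nil => rfl
  | cons b t ih =>
    have hstep : (List.recOn (motive := fun _ => ℕ) (b :: t) 0
        (fun b t ih => (if b = t.head?.getD b then 0 else 1) + ih))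
        = (if b = t.head?.getD b then 0 else 1) + List.recOn (motive := fun _ => ℕ) t 0
          (fun b t ih => (if b = t.head?.getD b then 0 else 1) + ih) := rfl
    rw [hstep, ih, ← alt_cons_headD]

lemma primrec_hv : Primrec fun a : ℕ × ℕ × ℕ => hv a.1 a.2.1 a.2.2 :=
  option_getD.comp (list_head?.comp primrec_cur) (const 0)

lemma primrec_isEv : Primrec fun a : ℕ × ℕ × ℕ => isEv a.1 a.2.1 a.2.2 := by
  have hprevtriple : Primrec fun a : ℕ × ℕ × ℕ => (a.1, a.2.1, a.2.2 - 1) :=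
    Primrec.pair fst (Primrec.pair (fst.comp snd)
      (nat_sub.comp (snd.comp snd) (const 1)))
  have hcurprev : Primrec fun a : ℕ × ℕ × ℕ => cur a.1 a.2.1 (a.2.2 - 1) :=
    primrec_cur.comp hprevtriple
  have h1 : PrimrecPred fun a : ℕ × ℕ × ℕ => cur a.1 a.2.1 a.2.2 ≠ [] :=
    PrimrecPred.not (Primrec.eq.comp primrec_cur (const []))
  have h2 : PrimrecPred fun a : ℕ × ℕ × ℕ => a.2.2 = 0 :=
    Primrec.eq.comp (snd.comp snd) (const 0)
  have h3 : PrimrecPred fun a : ℕ × ℕ × ℕ => cur a.1 a.2.1 (a.2.2 - 1) = [] :=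
    Primrec.eq.comp hcurprev (const [])
  have h4 : PrimrecPred fun a : ℕ × ℕ × ℕ =>
      alt (cur a.1 a.2.1 (a.2.2 - 1)) < alt (cur a.1 a.2.1 a.2.2) :=
    nat_lt.comp (primrec_alt.comp hcurprev) (primrec_alt.comp primrec_cur)
  have := h1.and (h2.or (h3.or h4))
  exact this.decide.of_eq fun a => by simp [isEv]

lemma primrec_Bf : Primrec fun a : ℕ × ℕ × ℕ => Bf a.1 a.2.1 a.2.2 := by
  have hstep : Primrec₂ fun (a : ℕ × ℕ × ℕ) (q : ℕ × ℕ) =>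
      Nat.pair q.2 (hv a.1 a.2.1 q.1) + 1 := by
    have htriple : Primrec fun b : (ℕ × ℕ × ℕ) × ℕ × ℕ => (b.1.1, b.1.2.1, b.2.1) :=
      Primrec.pair (fst.comp fst) (Primrec.pair ((fst.comp snd).comp fst) (fst.comp snd))
    exact (succ.comp (Primrec₂.natPair.comp (snd.comp snd) (primrec_hv.comp htriple))).to₂
  have := Primrec.nat_rec' (snd.comp snd : Primrec fun a : ℕ × ℕ × ℕ => a.2.2)
    (const 0) hstep
  refine this.of_eq fun a => ?_
  obtain ⟨p, x, s⟩ := a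
  simp only
  induction s with
  | zero => rfl
  | succ s ih => simpa [Bf] using by rw [ih]

lemma primrec_codeOf : Primrec fun a : ℕ × ℕ × ℕ => codeOf a.1 a.2.1 a.2.2 :=
  Primrec₂.natPair.comp primrec_Bf primrec_hv

set_option maxHeartbeats 1000000 in
lemma primrec_T' : Primrec fun a : ℕ × ℕ × ℕ => T' a.1 a.2.1 a.2.2 := by
  have htriple : Primrec fun b : (ℕ × ℕ × ℕ) × ℕ => (b.1.1, b.1.2.1, b.2) :=
    Primrec.pair (fst.comp fst) (Primrec.pair ((fst.comp snd).comp fst) snd)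
  have hEv : Primrec fun b : (ℕ × ℕ × ℕ) × ℕ => isEv b.1.1 b.1.2.1 b.2 :=
    primrec_isEv.comp htriple
  have hBeq : Primrec fun b : (ℕ × ℕ × ℕ) × ℕ => (b.1.2.2 == codeOf b.1.1 b.1.2.1 b.2) :=
    Primrec.beq.comp ((snd.comp snd).comp fst) (primrec_codeOf.comp htriple)
  have hinner : Primrec fun b : (ℕ × ℕ × ℕ) × ℕ =>
      (isEv b.1.1 b.1.2.1 b.2 && (b.1.2.2 == codeOf b.1.1 b.1.2.1 b.2)) :=
    (Primrec.cond hEv hBeq (const false)).of_eq fun b => by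
      cases h : isEv b.1.1 b.1.2.1 b.2 <;> simp [h]
  exact (primrec_list_any (list_range.comp (succ.comp (snd.comp snd))) hinner.to₂).of_eq
    fun a => rfl

end PrimrecProofs

/-! ### A monotone bounded sequence of naturals stabilizes -/

lemma stabilizes {a : ℕ → ℕ} (mono : ∀ {s t : ℕ}, s ≤ t → a s ≤ a t) (B : ℕ)
    (hb : ∀ s, a s ≤ B) : ∃ S, ∀ s, S ≤ s → a s = a S := by
  have hbdd : BddAbove (Set.range a) := ⟨B, by rintro _ ⟨s, rfl⟩; exact hb s⟩
  have hmem : sSup (Set.range a) ∈ Set.range a := Nat.sSup_mem ⟨a 0, ⟨0, rfl⟩⟩ hbdd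
  obtain ⟨S, hS⟩ := hmem
  refine ⟨S, fun s hs => ?_⟩
  have h1 : a s ≤ sSup (Set.range a) := le_csSup hbdd ⟨s, rfl⟩
  have h2 : a S ≤ a s := mono hs
  omega

/-! ### The two main directions -/

section Main
variable {ψ : ℕ → ℕ →. ℕ} {p x v : ℕ}

lemma forward_dir
    (hsound : ∀ s u w : ℕ, Fv p x s u = some w → w ∈ ψ x u)
    (hcomp : ∀ u w : ℕ, w ∈ ψ x u → ∃ s, Fv p x s u = some w)
    (h : LConv ψ x v) :
    ({y | T' p x y = true}.Finite ∧
      ∃ y, T' p x y = true ∧ (∀ z, T' p x z = true → z ≤ y) ∧ y.unpair.2 = v) := by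
  obtain ⟨u0, hv0, hstab⟩ := h
  -- all guesses from points `≥ u0` are equal to `v`
  have hbig : ∀ s u w, Fv p x s u = some w → u0 ≤ u → w = v := by
    intro s u w hf hle
    rcases Nat.eq_or_lt_of_le hle with heq | hlt
    · exact Part.mem_unique (hsound s u w hf) (heq ▸ hv0)
    · exact hstab u hlt w (hsound s u w hf)
  -- the alternation count of `cur` is bounded
  have haltb : ∀ s, alt (cur p x s) ≤ u0 + 2 := by
    intro s
    rcases le_or_gt u0 s with hus | hus
    · obtain ⟨hi, he, hmem⟩ := rev_range_decomp (Fv p x s) (show u0 < s + 1 by omega)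
      have hhiv : ∀ w ∈ hi, w = v := by
        intro w hw
        obtain ⟨u, h1, h2, h3⟩ := (hmem w).1 hw
        exact hbig s u w h3 (le_of_lt h1)
      have hlen : ((List.range (u0 + 1)).reverse.filterMap (Fv p x s)).length ≤ u0 + 1 := by
        calc ((List.range (u0 + 1)).reverse.filterMap (Fv p x s)).length
            ≤ (List.range (u0 + 1)).reverse.length := List.length_filterMap_le _ _
          _ = u0 + 1 := by simp
      calc alt (cur p x s) = alt (hi ++ (List.range (u0 + 1)).reverse.filterMap (Fv p x s)) := by
            rw [cur, he]
        _ ≤ alt hi + (alt ((List.range (u0 + 1)).reverse.filterMap (Fv p x s)) + 1) :=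
            alt_append_le _ _
        _ ≤ 0 + ((u0 + 1) + 1) := by
            have := alt_const hi hhiv
            have := (alt_le_length _).trans hlen
            omega
        _ ≤ u0 + 2 := by omega
    · calc alt (cur p x s) ≤ (cur p x s).length := alt_le_length _
        _ ≤ (List.range (s + 1)).reverse.length := List.length_filterMap_le _ _
        _ = s + 1 := by simp
        _ ≤ u0 + 2 := by omega
  -- the alternation count stabilizes
  obtain ⟨S₀, hS₀⟩ := stabilizes (fun h => alt_cur_mono h) (u0 + 2) haltb
  -- `u0` becomes visible
  obtain ⟨s₁, hs₁⟩ := hcomp u0 v hv0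
  set S := max S₀ s₁ with hSdef
  have hneS : ∀ s, S ≤ s → cur p x s ≠ [] := by
    intro s hs
    have hF : Fv p x s u0 = some v := Fv_mono (le_trans (le_max_right _ _) hs) hs₁
    exact List.ne_nil_of_mem (mem_cur.2 ⟨u0, hF⟩)
  -- no events after `S`
  have hnoev : ∀ s, S < s → isEv p x s = false := by
    intro s hs
    rw [← Bool.not_eq_true, isEv_iff]
    rintro ⟨hne, h0 | hprev | hlt⟩
    · omega
    · exact hneS (s - 1) (by omega) hprev
    · have e1 : alt (cur p x (s - 1)) = alt (cur p x S₀) := hS₀ _ (by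
        have := le_max_left S₀ s₁; omega)
      have e2 : alt (cur p x s) = alt (cur p x S₀) := hS₀ _ (by
        have := le_max_left S₀ s₁; omega)
      omega
  -- some event exists: the first stage with a nonempty guess list
  have hex : ∃ s, cur p x s ≠ [] := ⟨S, hneS S le_rfl⟩
  have hev0 : isEv p x (Nat.find hex) = true := by
    rw [isEv_iff]
    refine ⟨Nat.find_spec hex, ?_⟩
    rcases Nat.eq_zero_or_pos (Nat.find hex) with h0 | h0
    · exact Or.inl h0
    · refine Or.inr (Or.inl ?_)
      have := Nat.find_min hex (show Nat.find hex - 1 < Nat.find hex by omega)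
      simpa using this
  have hevle : ∀ s, isEv p x s = true → s ≤ S := by
    intro s hs
    by_contra hcon
    rw [hnoev s (by omega)] at hs
    exact Bool.noConfusion hs
  constructor
  · -- finiteness
    apply Set.Finite.subset ((Set.finite_Iic S).image fun s => codeOf p x s)
    rintro y hy
    rw [Set.mem_setOf_eq, T'_iff] at hy
    obtain ⟨s, he, rfl⟩ := hy
    exact ⟨s, hevle s he, rfl⟩
  · -- the maximal event
    set s' := Nat.findGreatest (fun s => isEv p x s = true) S with hs'def
    have hev' : isEv p x s' = true :=
      Nat.findGreatest_spec (P := fun s => isEv p x s = true) (hevle _ hev0) hev0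
    have hgr : ∀ t, s' < t → isEv p x t = false := by
      intro t ht
      rcases le_or_gt t S with hle | hlt
      · rw [← Bool.not_eq_true]
        exact Nat.findGreatest_is_greatest (P := fun s => isEv p x s = true) ht hle
      · exact hnoev t hlt
    refine ⟨codeOf p x s', T'_iff.2 ⟨s', hev', rfl⟩, ?_, ?_⟩
    · intro z hz
      rw [T'_iff] at hz
      obtain ⟨t, htev, rfl⟩ := hz
      have hts : t ≤ s' := by
        by_contra hcon
        rw [hgr t (by omega)] at htev
        exact Bool.noConfusion htev
      rcases Nat.eq_or_lt_of_le hts with heq | hlt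
      · rw [heq]
      · exact (codeOf_strictMono hlt).le
    · -- the value at the last event is `v`
      rw [codeOf, Nat.unpair_pair]
      suffices hsuf : (cur p x s').head? = some v by rw [hv, hsuf]; rfl
      have hne' : cur p x s' ≠ [] := (isEv_iff.1 hev').1
      set T := max S s' with hTdef
      have hs'T : s' ≤ T := le_max_right _ _
      have haltT : alt (cur p x T) = alt (cur p x s') :=
        alt_const_of_no_event hne' (fun t h1 _ => hgr t h1) hs'T
      have hheadT : (cur p x T).head? = (cur p x s').head? :=
        head_const_of_alt_const hne' hs'T haltT
      rw [← hheadT]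
      -- compute the head at the large stage `T`
      have hneT : cur p x T ≠ [] := cur_ne_nil_mono hs'T hne'
      obtain ⟨m, hm1, hm2, hm3⟩ := rev_range_head_inv (Fv p x T)
        (List.head?_eq_head hneT)
      have hu0T : Fv p x T u0 = some v := Fv_mono (le_trans (le_max_right _ _)
        (le_max_left S s')) hs₁
      have hu0m : u0 ≤ m := by
        by_contra hcon
        have hu0le : u0 ≤ T := Fv_u_le hu0T
        have := hm3 u0 (by omega) (by omega)
        rw [this] at hu0T
        exact nomatch hu0T
      have : (cur p x T).head hneT = v := hbig T m _ hm2 hu0m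
      rw [List.head?_eq_head hneT, this]

lemma backward_dir
    (hsound : ∀ s u w : ℕ, Fv p x s u = some w → w ∈ ψ x u)
    (hcomp : ∀ u w : ℕ, w ∈ ψ x u → ∃ s, Fv p x s u = some w)
    (y : ℕ) (hyT : T' p x y = true) (hymax : ∀ z, T' p x z = true → z ≤ y)
    (hyv : y.unpair.2 = v) : LConv ψ x v := by
  obtain ⟨s', hev', rfl⟩ := T'_iff.1 hyT
  have hne' : cur p x s' ≠ [] := (isEv_iff.1 hev').1
  have hhead' : (cur p x s').head? = some v := by
    rw [codeOf, Nat.unpair_pair] at hyv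
    rw [List.head?_eq_head hne']
    rw [hv, List.head?_eq_head hne'] at hyv
    simpa using hyv
  -- no events after `s'`
  have hnoev : ∀ t, s' < t → isEv p x t = false := by
    intro t ht
    by_contra hcon
    have htev : isEv p x t = true := by
      cases h : isEv p x t
      · exact absurd h hcon
      · rfl
    have h1 : codeOf p x t ≤ codeOf p x s' := hymax _ (T'_iff.2 ⟨t, htev, rfl⟩)
    have h2 := codeOf_strictMono (p := p) (x := x) ht
    omega
  have haltconst : ∀ t, s' ≤ t → alt (cur p x t) = alt (cur p x s') := fun t ht =>
    alt_const_of_no_event hne' (fun r h1 _ => hnoev r h1) ht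
  have hheads : ∀ t, s' ≤ t → (cur p x t).head? = some v := fun t ht => by
    rw [head_const_of_alt_const hne' ht (haltconst t ht)]; exact hhead'
  -- the maximal visible point `m` at stage `s'`
  obtain ⟨m, hmlt, hm1, hm2⟩ := rev_range_head_inv (Fv p x s') hhead'
  refine ⟨m, hsound _ _ _ hm1, ?_⟩
  intro t ht w hw
  by_contra hwv
  obtain ⟨st, hst⟩ := hcomp t w hw
  set s := max (max st s') t with hsdef
  have hFt : Fv p x s t = some w := Fv_mono (le_trans (le_max_left _ _) (le_max_left _ _)) hst
  have hFm : Fv p x s m = some v :=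
    Fv_mono (le_trans (le_max_right _ _) (le_max_left _ _)) hm1
  have hs's : s' ≤ s := le_trans (le_max_right _ _) (le_max_left _ _)
  have hts : t ≤ s := le_max_right _ _
  have hms : m ≤ s' := by omega
  -- decompose `cur` at `m`, at stages `s` and `s'`
  obtain ⟨hi, he, hmem⟩ := rev_range_decomp (Fv p x s) (show m < s + 1 by omega)
  obtain ⟨hi', he', hmem'⟩ := rev_range_decomp (Fv p x s') (show m < s' + 1 by omega)
  have hi'nil : hi' = [] := by
    rw [List.eq_nil_iff_forall_not_mem]
    intro w' hw'
    obtain ⟨u, h1, h2, h3⟩ := (hmem' w').1 hw'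
    rw [hm2 u h1 h2] at h3
    exact nomatch h3
  have hcurs' : cur p x s' = v :: (List.range m).reverse.filterMap (Fv p x s') := by
    rw [cur, he', hi'nil, List.nil_append, rev_range_succ, List.filterMap_cons, hm1]
  have hcurs : cur p x s
      = hi ++ v :: (List.range m).reverse.filterMap (Fv p x s) := by
    rw [cur, he, rev_range_succ, List.filterMap_cons, hFm]
  have hwhi : w ∈ hi := (hmem w).2 ⟨t, ht, by omega, hFt⟩
  have hhin : hi ≠ [] := List.ne_nil_of_mem hwhi
  have hheadhi : hi.head? = some v := by
    have hh := hheads s hs's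
    rw [hcurs, head?_append_of_ne_nil hhin] at hh
    exact hh
  obtain ⟨a, rest, hirest⟩ : ∃ a rest, hi = a :: rest := by
    cases hi with
    | nil => exact absurd rfl hhin
    | cons a rest => exact ⟨a, rest, rfl⟩
  have hav : a = v := by
    rw [hirest, List.head?_cons, Option.some.injEq] at hheadhi
    exact hheadhi
  have hwrest : w ∈ rest := by
    rw [hirest, List.mem_cons] at hwhi
    rcases hwhi with h | h
    · exact absurd (h.trans hav) hwv
    · exact h
  -- build the alternating sublist `[v, w, v, …]`
  have hlosub : List.Sublist ((List.range m).reverse.filterMap (Fv p x s'))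
      ((List.range m).reverse.filterMap (Fv p x s)) :=
    filterMap_sublist_mono _ _ (fun u w' => Fv_mono hs's) _
  have hsub : List.Sublist (v :: w :: v :: (List.range m).reverse.filterMap (Fv p x s'))
      (cur p x s) := by
    rw [hcurs, hirest, hav]
    refine List.Sublist.cons₂ v ?_
    have h1 : List.Sublist [w] rest := List.singleton_sublist.2 hwrest
    have h2 : List.Sublist (v :: (List.range m).reverse.filterMap (Fv p x s'))
        (v :: (List.range m).reverse.filterMap (Fv p x s)) := hlosub.cons₂ v
    exact h1.append h2
  have halt1 : alt (v :: w :: v :: (List.range m).reverse.filterMap (Fv p x s'))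
      = 2 + alt (v :: (List.range m).reverse.filterMap (Fv p x s')) := by
    rw [alt, alt, if_neg (fun hh => hwv hh.symm), if_neg (fun hh => hwv hh)]
    omega
  have halt2 := alt_le_of_sublist hsub
  have halt3 : alt (cur p x s) = alt (cur p x s') := haltconst s hs's
  rw [halt1, halt3, hcurs'] at halt2
  omega

end Main

/-- Computing in the Limit Normal Form. -/
theorem stmt2 : ∃ U : ℕ → ℕ, Primrec U ∧ ∃ T' : ℕ → ℕ → ℕ → Bool,
    Primrec (fun a : ℕ × ℕ × ℕ => T' a.1 a.2.1 a.2.2) ∧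
    ∀ ψ : ℕ → ℕ →. ℕ, Partrec₂ ψ → ∃ p : ℕ, ∀ x v : ℕ,
      LConv ψ x v ↔
        ({y | T' p x y = true}.Finite ∧
          ∃ y, T' p x y = true ∧ (∀ z, T' p x z = true → z ≤ y) ∧ U y = v) := by
  refine ⟨fun y => y.unpair.2, Primrec.snd.comp Primrec.unpair, T',
    PrimrecProofs.primrec_T', ?_⟩
  intro ψ hψ
  have hfun : Partrec fun n : ℕ => ψ n.unpair.1 n.unpair.2 := hψ.comp (Computable.fst.comp Computable.unpair) (Computable.snd.comp Computable.unpair)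
  obtain ⟨c, hc⟩ := Nat.Partrec.Code.exists_code.1 (Partrec.nat_iff.1 hfun)
  refine ⟨Encodable.encode c, ?_⟩
  intro x v
  have hofnat : (Denumerable.ofNat Code (Encodable.encode c)) = c :=
    Denumerable.ofNat_encode c
  have hsound : ∀ s u w : ℕ, Fv (Encodable.encode c) x s u = some w → w ∈ ψ x u := by
    intro s u w h
    rw [Fv, hofnat] at h
    have h2 : w ∈ c.eval (Nat.pair x u) := Nat.Partrec.Code.evaln_sound h
    rw [hc] at h2
    simpa [Nat.unpair_pair] using h2
  have hcomp : ∀ u w : ℕ, w ∈ ψ x u → ∃ s, Fv (Encodable.encode c) x s u = some w := by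
    intro u w h
    have h2 : w ∈ c.eval (Nat.pair x u) := by
      rw [hc]; simpa [Nat.unpair_pair] using h
    obtain ⟨k, hk⟩ := Nat.Partrec.Code.evaln_complete.1 h2
    exact ⟨k, by rw [Fv, hofnat]; exact Nat.Partrec.Code.evaln_mono (Nat.le_succ k) hk⟩
  constructor
  · intro h
    exact forward_dir hsound hcomp h
  · rintro ⟨_, y, h1, h2, h3⟩
    exact backward_dir hsound hcomp y h1 h2 h3
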